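/- Assume Hypotheses 1 and 3. For every compact set K ⊂ ℝ∖{0} there exist constants c_K > 0 and c'_K > 0 such that for every n ≥ 1, sup_{t∈K} ‖P_tⁿ‖ ≤ c_K·e^{−c'_K·n}, where ‖·‖ is the operator norm induced by the sup norm on complex-valued functions on 𝕏. -/

import Mathlib

open Finset Filter Real Topology MeasureTheory

namespace CLLT

variable {X : Type*}

/-- Product of the transition weights along a path. -/
noncomputable def wt (P : X → X → ℝ) : X → List X → ℝ
  | _, [] => 1
  | x, y :: ys => P x y * wt P y ys

/-- Extension of a finite path `X₁, …, Xₙ` to a trajectory `ℕ → X` with `X₀ = x`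
(values beyond time `n` are irrelevant and set to `x`). -/
def pathExt (x : X) {n : ℕ} (path : Fin n → X) : ℕ → X := fun k =>
  if h : 1 ≤ k ∧ k ≤ n then path ⟨k - 1, by omega⟩ else x

/-- Expectation `𝔼_x (F (X₀, X₁, …))` of a functional of the first `n` steps of the
Markov chain with transition kernel `P` started at `X₀ = x`. -/
noncomputable def Ex [Fintype X] (P : X → X → ℝ) (x : X) (n : ℕ)
    (F : (ℕ → X) → ℝ) : ℝ :=
  ∑ path : Fin n → X, wt P x (List.ofFn path) * F (pathExt x path)

open Classical in
/-- Real-valued indicator of a proposition. -/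
noncomputable def ind (p : Prop) : ℝ := if p then 1 else 0

/-- Partial sum `S_k = f(X₁) + ⋯ + f(X_k)` along a trajectory. -/
noncomputable def Spath (f : X → ℝ) (ω : ℕ → X) (k : ℕ) : ℝ :=
  ∑ i ∈ Finset.Icc 1 k, f (ω i)

/-- The event `τ_y > n`, i.e. `y + S_k > 0` for all `k = 1, …, n`. -/
def survives (f : X → ℝ) (y : ℝ) (n : ℕ) (ω : ℕ → X) : Prop :=
  ∀ k ∈ Finset.Icc 1 n, 0 < y + Spath f ω k

/-- `n`-step transition kernel. -/
noncomputable def kpow [Fintype X] [DecidableEq X] (P : X → X → ℝ) : ℕ → X → X → ℝ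
  | 0 => fun x x' => if x = x' then 1 else 0
  | n + 1 => fun x x' => ∑ y, P x y * kpow P n y x'

/-- Transition operator acting on functions. -/
noncomputable def Pop [Fintype X] (P : X → X → ℝ) (g : X → ℝ) (x : X) : ℝ :=
  ∑ x', P x x' * g x'

/-- Asymptotic variance `σ² = ν(f²) + 2 ∑_{n ≥ 1} ν(f ⬝ Pⁿ f)`. -/
noncomputable def sigma2 [Fintype X] (P : X → X → ℝ) (ν f : X → ℝ) : ℝ :=
  (∑ x, f x ^ 2 * ν x) + 2 * ∑' n : ℕ, ∑ x, f x * ((Pop P)^[n + 1] f) x * ν x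

/-- Hypothesis 1 (primitivity). -/
def Primitive [Fintype X] [DecidableEq X] (P : X → X → ℝ) : Prop :=
  ∃ k₀ : ℕ, 1 ≤ k₀ ∧ ∀ x x', 0 < kpow P k₀ x x'

/-- Hypothesis 3 (non-lattice condition). -/
def NonLattice [Fintype X] (P : X → X → ℝ) (f : X → ℝ) : Prop :=
  ∀ θ a : ℝ, ∃ (n : ℕ) (g : Fin (n + 1) → X),
    (0 < ∏ i : Fin (n + 1), P (g i) (g (i + 1))) ∧
    ∀ m : ℤ, (∑ i, f (g i)) - (n + 1 : ℝ) * θ ≠ a * (m : ℝ)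

/-- `P` is a stochastic matrix and `ν` is a positive invariant probability for it. -/
structure IsStochastic [Fintype X] (P : X → X → ℝ) (ν : X → ℝ) : Prop where
  nonneg : ∀ x x', 0 ≤ P x x'
  rowSum : ∀ x, ∑ x', P x x' = 1
  nuPos : ∀ x, 0 < ν x
  nuSum : ∑ x, ν x = 1
  nuInv : ∀ x', ∑ x, ν x * P x x' = ν x'

/-- Dual kernel `P*(x, x') = ν(x') P(x', x) / ν(x)`. -/
noncomputable def dualK (P : X → X → ℝ) (ν : X → ℝ) (x x' : X) : ℝ :=
  ν x' * P x' x / ν x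

/-- Sup norm of a function on a finite set. -/
noncomputable def supN [Fintype X] [Nonempty X] (ψ : X → ℝ) : ℝ := ⨆ x, |ψ x|

/-- Rayleigh density `φ₊(t) = t e^{-t²/2} 𝟙_{t ≥ 0}`. -/
noncomputable def rayleigh (t : ℝ) : ℝ := if 0 ≤ t then t * Real.exp (-t ^ 2 / 2) else 0

/-- Centred normal density with standard deviation `s`. -/
noncomputable def gauss (s u : ℝ) : ℝ :=
  Real.exp (-u ^ 2 / (2 * s ^ 2)) / (s * Real.sqrt (2 * π))

/-- Perturbed transition operator `P_t`, as a complex matrix. -/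
noncomputable def Pmat [Fintype X] (P : X → X → ℝ) (f : X → ℝ) (t : ℝ) : Matrix X X ℂ :=
  Matrix.of fun x x' => (P x x' : ℂ) * Complex.exp (Complex.I * (t : ℂ) * (f x' : ℂ))

/-- A complex matrix viewed as a continuous linear operator on `X → ℂ`
(equipped with the sup norm). -/
noncomputable def toCLM [Fintype X] (M : Matrix X X ℂ) : (X → ℂ) →L[ℂ] (X → ℂ) :=
  LinearMap.toContinuousLinearMap M.mulVecLin

/-- Fourier transform `ĥ(t) = ∫ e^{-i t u} h(u) du`. -/
noncomputable def FT (h : ℝ → ℝ) (t : ℝ) : ℂ :=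
  ∫ u : ℝ, Complex.exp (-(Complex.I * (t : ℂ) * (u : ℂ))) * (h u : ℂ)

/-- Convolution `(g ∗ k)(u) = ∫ g(v) k(u - v) dv`. -/
noncomputable def convR (g k : ℝ → ℝ) (u : ℝ) : ℝ := ∫ v : ℝ, g v * k (u - v)

/-- Stone's kernel `κ`. -/
noncomputable def kapp (u : ℝ) : ℝ :=
  if u = 0 then 1 / (2 * π) else (Real.sin (u / 2) / (u / 2)) ^ 2 / (2 * π)

/-- Scaled kernel `κ_δ(u) = κ(u/δ)/δ`. -/
noncomputable def kappD (δ u : ℝ) : ℝ := kapp (u / δ) / δ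

/-- Upper regularisation `h̄_ε(u) = sup_{v ∈ [u-ε, u+ε]} h(v)`. -/
noncomputable def upReg (h : ℝ → ℝ) (ε u : ℝ) : ℝ := sSup (h '' Set.Icc (u - ε) (u + ε))

/-- Lower regularisation `ẖ_ε(u) = inf_{v ∈ [u-ε, u+ε]} h(v)`. -/
noncomputable def loReg (h : ℝ → ℝ) (ε u : ℝ) : ℝ := sInf (h '' Set.Icc (u - ε) (u + ε))

/-- The class `𝓗_ε`: non-negative, locally bounded, with `h`, `h̄_ε`, `ẖ_ε`
measurable and Lebesgue integrable. -/
def MemH (ε : ℝ) (h : ℝ → ℝ) : Prop :=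
  (∀ u, 0 ≤ h u) ∧ (∀ K : Set ℝ, IsCompact K → BddAbove (h '' K)) ∧
  Measurable h ∧ Measurable (upReg h ε) ∧ Measurable (loReg h ε) ∧
  Integrable h ∧ Integrable (upReg h ε) ∧ Integrable (loReg h ε)

/-! ### Auxiliary lemmas for Statement 11 -/

section Aux

variable [Fintype X] [DecidableEq X]

lemma toCLM_apply (M : Matrix X X ℂ) (g : X → ℂ) : toCLM M g = M.mulVec g := rfl

lemma toCLM_mul (M N : Matrix X X ℂ) : toCLM (M * N) = toCLM M * toCLM N := by
  ext g x
  simp [toCLM_apply, ContinuousLinearMap.mul_apply, Matrix.mulVec_mulVec]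

lemma toCLM_pow (M : Matrix X X ℂ) (n : ℕ) : toCLM (M ^ n) = (toCLM M) ^ n := by
  induction n with
  | zero =>
      rw [pow_zero, pow_zero]
      ext g x
      simp [toCLM_apply, Matrix.one_mulVec]
  | succ n ih => rw [pow_succ, pow_succ, toCLM_mul, ih]

lemma toCLM_add (M N : Matrix X X ℂ) : toCLM (M + N) = toCLM M + toCLM N := by
  ext g x
  simp [toCLM_apply, Matrix.add_mulVec]

lemma toCLM_smul (a : ℂ) (M : Matrix X X ℂ) : toCLM (a • M) = a • toCLM M := by
  ext g x
  simp [toCLM_apply, Matrix.smul_mulVec]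

lemma toCLM_sum {ι : Type*} (s : Finset ι) (M : ι → Matrix X X ℂ) :
    toCLM (∑ i ∈ s, M i) = ∑ i ∈ s, toCLM (M i) := by
  classical
  induction s using Finset.induction with
  | empty => ext g x; simp [toCLM_apply]
  | insert _ _ hns ih =>
      rw [Finset.sum_insert hns, Finset.sum_insert hns, toCLM_add, ih]

lemma norm_toCLM_le (M : Matrix X X ℂ) {b : ℝ} (hb : 0 ≤ b)
    (h : ∀ x, ∑ x', ‖M x x'‖ ≤ b) : ‖toCLM M‖ ≤ b := by
  refine ContinuousLinearMap.opNorm_le_bound _ hb fun g => ?_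
  rw [pi_norm_le_iff_of_nonneg (by positivity)]
  intro x
  calc ‖toCLM M g x‖ = ‖∑ x', M x x' * g x'‖ := by
        simp [toCLM_apply, Matrix.mulVec, dotProduct]
    _ ≤ ∑ x', ‖M x x' * g x'‖ := norm_sum_le _ _
    _ ≤ ∑ x', ‖M x x'‖ * ‖g‖ := by
        refine Finset.sum_le_sum fun x' _ => ?_
        rw [norm_mul]
        exact mul_le_mul_of_nonneg_left (norm_le_pi_norm g x') (norm_nonneg _)
    _ = (∑ x', ‖M x x'‖) * ‖g‖ := by rw [Finset.sum_mul]
    _ ≤ b * ‖g‖ := mul_le_mul_of_nonneg_right (h x) (norm_nonneg _)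

lemma norm_exp_itf (t fx : ℝ) : ‖Complex.exp (Complex.I * t * fx)‖ = 1 := by
  rw [Complex.norm_exp]
  have h : (Complex.I * t * fx).re = 0 := by simp [Complex.mul_re]
  rw [h, Real.exp_zero]

lemma Pmat_rowsum_norm (P : X → X → ℝ) (f : X → ℝ)
    (hP0 : ∀ x x', 0 ≤ P x x') (hP1 : ∀ x, ∑ x', P x x' = 1) (t : ℝ) (x : X) :
    ∑ x', ‖Pmat P f t x x'‖ = 1 := by
  rw [← hP1 x]
  refine Finset.sum_congr rfl fun x' _ => ?_
  simp only [Pmat, Matrix.of_apply, norm_mul, norm_exp_itf, mul_one,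
    Complex.norm_real, Real.norm_eq_abs, abs_of_nonneg (hP0 x x')]

lemma norm_toCLM_Pmat_le_one (P : X → X → ℝ) (f : X → ℝ)
    (hP0 : ∀ x x', 0 ≤ P x x') (hP1 : ∀ x, ∑ x', P x x' = 1) (t : ℝ) :
    ‖toCLM (Pmat P f t)‖ ≤ 1 :=
  norm_toCLM_le _ zero_le_one fun x => le_of_eq (Pmat_rowsum_norm P f hP0 hP1 t x)

lemma kpow_rowsum [DecidableEq X] (P : X → X → ℝ) (hP1 : ∀ x, ∑ x', P x x' = 1) :
    ∀ n x, ∑ x', kpow P n x x' = 1 := by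
  intro n
  induction n with
  | zero => intro x; simp [kpow]
  | succ n ih =>
      intro x
      simp only [kpow]
      rw [Finset.sum_comm]
      calc ∑ y, ∑ x', P x y * kpow P n y x'
          = ∑ y, P x y * ∑ x', kpow P n y x' := by simp [Finset.mul_sum]
        _ = ∑ y, P x y := by simp [ih]
        _ = 1 := hP1 x

lemma norm_pow_le_of_le {A : (X → ℂ) →L[ℂ] (X → ℂ)} {ρ : ℝ} (hρ : ‖A‖ ≤ ρ) (n : ℕ) :
    ‖A ^ n‖ ≤ ρ ^ n := by
  induction n with
  | zero => rw [pow_zero, pow_zero]; exact ContinuousLinearMap.norm_id_le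
  | succ n ih =>
      rw [pow_succ, pow_succ]
      calc ‖A ^ n * A‖ ≤ ‖A ^ n‖ * ‖A‖ := norm_mul_le _ _
        _ ≤ ρ ^ n * ρ :=
          mul_le_mul ih hρ (norm_nonneg _) (pow_nonneg ((norm_nonneg A).trans hρ) n)

lemma continuous_norm_Pmat_pow (P : X → X → ℝ) (f : X → ℝ) (k : ℕ) :
    Continuous fun s : ℝ => ‖toCLM (Pmat P f s ^ k)‖ := by
  classical
  have hdecomp : ∀ s : ℝ, toCLM (Pmat P f s) =
      ∑ x : X, ∑ x' : X, ((P x x' : ℂ) * Complex.exp (Complex.I * s * f x')) •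
        toCLM (Matrix.single x x' 1) := by
    intro s
    conv_lhs => rw [Matrix.matrix_eq_sum_single (Pmat P f s)]
    rw [toCLM_sum]
    refine Finset.sum_congr rfl fun x _ => ?_
    rw [toCLM_sum]
    refine Finset.sum_congr rfl fun x' _ => ?_
    rw [← toCLM_smul, Matrix.smul_single, smul_eq_mul, mul_one]
    rfl
  have h1 : Continuous fun s : ℝ => toCLM (Pmat P f s) := by
    have : Continuous fun s : ℝ =>
        ∑ x : X, ∑ x' : X, ((P x x' : ℂ) * Complex.exp (Complex.I * s * f x')) •
          toCLM (Matrix.single x x' 1) := by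
      refine continuous_finset_sum _ fun x _ => continuous_finset_sum _ fun x' _ => ?_
      refine Continuous.smul (M := ℂ) (g := fun _ : ℝ => toCLM (Matrix.single x x' (1 : ℂ))) ?_ continuous_const
      refine continuous_const.mul (Complex.continuous_exp.comp ?_)
      exact (continuous_const.mul Complex.continuous_ofReal).mul continuous_const
    simpa only [← hdecomp] using this
  have h2 : Continuous fun s : ℝ => (toCLM (Pmat P f s)) ^ k := h1.pow k
  have h3 : (fun s : ℝ => ‖toCLM (Pmat P f s ^ k)‖)
      = fun s : ℝ => ‖(toCLM (Pmat P f s)) ^ k‖ := by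
    funext s; rw [toCLM_pow]
  rw [h3]
  exact h2.norm

/-- No eigenvalue of modulus one for `P_t`, `t ≠ 0`. -/
lemma no_unimodular_eigen [DecidableEq X] [Nonempty X] (P : X → X → ℝ) (f : X → ℝ)
    (hP0 : ∀ x x', 0 ≤ P x x') (hP1 : ∀ x, ∑ x', P x x' = 1)
    (h1 : Primitive P) (h3 : NonLattice P f) {t : ℝ} (ht : t ≠ 0)
    {lam : ℂ} (hlam : ‖lam‖ = 1) {g : X → ℂ} (hg : g ≠ 0)
    (heig : ∀ x, ∑ x', (P x x' : ℂ) * Complex.exp (Complex.I * t * f x') * g x'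
      = lam * g x) : False := by
  classical
  obtain ⟨k₀, hk₀1, hk₀⟩ := h1
  -- Step A : pointwise subinvariance of |g|
  have hstep : ∀ x, ‖g x‖ ≤ ∑ x', P x x' * ‖g x'‖ := by
    intro x
    calc ‖g x‖ = ‖lam * g x‖ := by rw [norm_mul, hlam, one_mul]
      _ = ‖∑ x', (P x x' : ℂ) * Complex.exp (Complex.I * t * f x') * g x'‖ := by
          rw [heig x]
      _ ≤ ∑ x', ‖(P x x' : ℂ) * Complex.exp (Complex.I * t * f x') * g x'‖ :=
          norm_sum_le _ _
      _ = ∑ x', P x x' * ‖g x'‖ := by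
          refine Finset.sum_congr rfl fun x' _ => ?_
          rw [norm_mul, norm_mul, norm_exp_itf, mul_one, Complex.norm_real,
            Real.norm_eq_abs, abs_of_nonneg (hP0 x x')]
  -- Step B : iterate
  have hiter : ∀ k x, ‖g x‖ ≤ ∑ x', kpow P k x x' * ‖g x'‖ := by
    intro k
    induction k with
    | zero => intro x; simp [kpow]
    | succ k ih =>
        intro x
        calc ‖g x‖ ≤ ∑ y, P x y * ‖g y‖ := hstep x
          _ ≤ ∑ y, P x y * ∑ x', kpow P k y x' * ‖g x'‖ :=
              Finset.sum_le_sum fun y _ =>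
                mul_le_mul_of_nonneg_left (ih y) (hP0 x y)
          _ = ∑ x', kpow P (k + 1) x x' * ‖g x'‖ := by
              simp only [kpow, Finset.sum_mul, Finset.mul_sum, mul_assoc]
              rw [Finset.sum_comm]
  -- Step C : maximizer
  obtain ⟨x₀, -, hx₀⟩ := Finset.exists_max_image Finset.univ (fun x => ‖g x‖)
    Finset.univ_nonempty
  set Mg := ‖g x₀‖ with hMgdef
  have hx₀' : ∀ x, ‖g x‖ ≤ Mg := fun x => hx₀ x (Finset.mem_univ x)
  have hMgpos : 0 < Mg := by
    obtain ⟨x, hx⟩ := Function.ne_iff.mp hg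
    exact lt_of_lt_of_le (norm_pos_iff.mpr hx) (hx₀' x)
  -- Step D : |g| is constant
  have hconst : ∀ x, ‖g x‖ = Mg := by
    have hs1 : ∑ x', kpow P k₀ x₀ x' = 1 := kpow_rowsum P hP1 k₀ x₀
    have hle : ∑ x', kpow P k₀ x₀ x' * (Mg - ‖g x'‖) ≤ 0 := by
      have h' := hiter k₀ x₀
      have hexp : ∑ x', kpow P k₀ x₀ x' * (Mg - ‖g x'‖)
          = Mg - ∑ x', kpow P k₀ x₀ x' * ‖g x'‖ := by
        simp only [mul_sub, Finset.sum_sub_distrib, ← Finset.sum_mul, hs1, one_mul]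
      rw [hexp]
      linarith
    have hnn : ∀ x' ∈ Finset.univ, (0:ℝ) ≤ kpow P k₀ x₀ x' * (Mg - ‖g x'‖) :=
      fun x' _ => mul_nonneg (le_of_lt (hk₀ x₀ x')) (by linarith [hx₀' x'])
    have hzero : ∑ x', kpow P k₀ x₀ x' * (Mg - ‖g x'‖) = 0 :=
      le_antisymm hle (Finset.sum_nonneg hnn)
    intro x
    have h0 := (Finset.sum_eq_zero_iff_of_nonneg hnn).mp hzero x (Finset.mem_univ x)
    rcases mul_eq_zero.mp h0 with h | h
    · exact absurd h (ne_of_gt (hk₀ x₀ x))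
    · linarith
  have hgne : ∀ x, g x ≠ 0 := by
    intro x h0
    have := hconst x
    rw [h0, norm_zero] at this
    exact absurd this.symm (ne_of_gt hMgpos)
  -- Step E : phase rigidity
  have hphase : ∀ x x', 0 < P x x' →
      Complex.exp (Complex.I * t * f x') * g x' = lam * g x := by
    intro x x' hpos
    set c : X → ℂ := fun y => (P x y : ℂ) * Complex.exp (Complex.I * t * f y) * g y
      with hc
    set w : ℂ := starRingEnd ℂ (lam * g x) with hw
    have hnlamg : ‖lam * g x‖ = Mg := by rw [norm_mul, hlam, one_mul, hconst]
    have hnw : ‖w‖ = Mg := by rw [hw, RCLike.norm_conj, hnlamg]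
    have hnc : ∀ y, ‖c y‖ = P x y * Mg := by
      intro y
      rw [hc]
      simp only [norm_mul, norm_exp_itf, mul_one, Complex.norm_real, Real.norm_eq_abs,
        abs_of_nonneg (hP0 x y), hconst]
    have hww : w * (lam * g x) = ((Mg ^ 2 : ℝ) : ℂ) := by
      rw [hw, mul_comm, Complex.mul_conj, Complex.normSq_eq_norm_sq,
        hnlamg]
    have hsumc : ∑ y, c y * w = ((Mg ^ 2 : ℝ) : ℂ) := by
      rw [← Finset.sum_mul, heig x, hw, Complex.mul_conj, Complex.normSq_eq_norm_sq,
        hnlamg]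
    have hsumre : ∑ y, (c y * w).re = Mg ^ 2 := by
      rw [← Complex.re_sum, hsumc, Complex.ofReal_re]
    have hterm_le : ∀ y, (c y * w).re ≤ P x y * Mg ^ 2 := by
      intro y
      calc (c y * w).re ≤ ‖c y * w‖ := Complex.re_le_norm _
        _ = ‖c y‖ * ‖w‖ := by rw [norm_mul]
        _ = P x y * Mg ^ 2 := by rw [hnc, hnw]; ring
    have heach : ∀ y, (c y * w).re = P x y * Mg ^ 2 := by
      have hnn : ∀ y ∈ Finset.univ, (0:ℝ) ≤ P x y * Mg ^ 2 - (c y * w).re :=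
        fun y _ => by linarith [hterm_le y]
      have hzero : ∑ y, (P x y * Mg ^ 2 - (c y * w).re) = 0 := by
        rw [Finset.sum_sub_distrib, ← Finset.sum_mul, hP1 x, one_mul, hsumre, sub_self]
      intro y
      have h0 := (Finset.sum_eq_zero_iff_of_nonneg hnn).mp hzero y (Finset.mem_univ y)
      linarith
    -- `c x' * w` is a nonnegative real
    have habs : ‖c x' * w‖ = (c x' * w).re := by
      rw [norm_mul, hnc, hnw, heach]
      ring
    have him : (c x' * w).im = 0 := by
      have hsq := Complex.sq_norm (c x' * w)
      rw [habs, Complex.normSq_apply] at hsq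
      nlinarith [sq_nonneg ((c x' * w).im)]
    have hcw : c x' * w = ((P x x' * Mg ^ 2 : ℝ) : ℂ) := by
      apply Complex.ext
      · rw [heach x', Complex.ofReal_re]
      · rw [him, Complex.ofReal_im]
    -- multiply by `lam * g x`
    have hkey : c x' * ((Mg ^ 2 : ℝ) : ℂ) = ((P x x' * Mg ^ 2 : ℝ) : ℂ) * (lam * g x) := by
      calc c x' * ((Mg ^ 2 : ℝ) : ℂ) = c x' * (w * (lam * g x)) := by rw [hww]
        _ = (c x' * w) * (lam * g x) := by ring
        _ = ((P x x' * Mg ^ 2 : ℝ) : ℂ) * (lam * g x) := by rw [hcw]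
    have hMg2ne : ((Mg ^ 2 : ℝ) : ℂ) ≠ 0 := by
      exact_mod_cast ne_of_gt (by positivity : (0:ℝ) < Mg ^ 2)
    have hPne : (P x x' : ℂ) ≠ 0 := by exact_mod_cast ne_of_gt hpos
    apply mul_left_cancel₀ hPne
    apply mul_right_cancel₀ hMg2ne
    calc (P x x' : ℂ) * (Complex.exp (Complex.I * t * f x') * g x') * ((Mg ^ 2 : ℝ) : ℂ)
        = c x' * ((Mg ^ 2 : ℝ) : ℂ) := by rw [hc]; ring
      _ = ((P x x' * Mg ^ 2 : ℝ) : ℂ) * (lam * g x) := hkey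
      _ = (P x x' : ℂ) * (lam * g x) * ((Mg ^ 2 : ℝ) : ℂ) := by push_cast; ring
  -- Step F : non-lattice contradiction
  set θ₀ := lam.arg with hθ₀
  have hlamexp : lam = Complex.exp (θ₀ * Complex.I) := by
    have h' := Complex.norm_mul_exp_arg_mul_I lam
    rw [hlam] at h'
    rw [← h', Complex.ofReal_one, one_mul]
  obtain ⟨n, γ, hprodpos, hne⟩ := h3 (θ₀ / t) (2 * π / t)
  have hPi : ∀ i : Fin (n + 1), 0 < P (γ i) (γ (i + 1)) := by
    intro i
    rcases (hP0 (γ i) (γ (i + 1))).lt_or_eq with h | h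
    · exact h
    · exfalso
      have : ∏ j : Fin (n + 1), P (γ j) (γ (j + 1)) = 0 :=
        Finset.prod_eq_zero (Finset.mem_univ i) h.symm
      rw [this] at hprodpos
      exact lt_irrefl 0 hprodpos
  have hstepi : ∀ i : Fin (n + 1),
      Complex.exp (Complex.I * t * f (γ (i + 1))) * g (γ (i + 1)) = lam * g (γ i) :=
    fun i => hphase _ _ (hPi i)
  have hprodeq : ∏ i : Fin (n + 1), (Complex.exp (Complex.I * t * f (γ (i + 1))) * g (γ (i + 1)))
      = ∏ i : Fin (n + 1), (lam * g (γ i)) :=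
    Finset.prod_congr rfl fun i _ => hstepi i
  have hshift : ∀ F : X → ℂ, ∏ i : Fin (n + 1), F (γ (i + 1)) = ∏ i : Fin (n + 1), F (γ i) :=
    fun F => Fintype.prod_equiv (Equiv.addRight (1 : Fin (n + 1)))
      (fun i => F (γ (i + 1))) (fun i => F (γ i)) (fun i => rfl)
  have hgprodne : (∏ i : Fin (n + 1), g (γ i)) ≠ 0 :=
    Finset.prod_ne_zero_iff.mpr fun i _ => hgne (γ i)
  have hcycle : ∏ i : Fin (n + 1), Complex.exp (Complex.I * t * f (γ i)) = lam ^ (n + 1) := by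
    apply mul_right_cancel₀ hgprodne
    calc (∏ i : Fin (n + 1), Complex.exp (Complex.I * t * f (γ i))) * ∏ i : Fin (n + 1), g (γ i)
        = (∏ i : Fin (n + 1), Complex.exp (Complex.I * t * f (γ (i + 1)))) *
            ∏ i : Fin (n + 1), g (γ (i + 1)) := by
          rw [hshift (fun y => Complex.exp (Complex.I * t * f y)), hshift g]
      _ = ∏ i : Fin (n + 1), (Complex.exp (Complex.I * t * f (γ (i + 1))) * g (γ (i + 1))) := by
          rw [Finset.prod_mul_distrib]
      _ = ∏ i : Fin (n + 1), (lam * g (γ i)) := hprodeq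
      _ = lam ^ (n + 1) * ∏ i : Fin (n + 1), g (γ i) := by
          rw [Finset.prod_mul_distrib, Finset.prod_const, Finset.card_univ, Fintype.card_fin]
  have hexpsum : Complex.exp (Complex.I * t * (∑ i : Fin (n + 1), f (γ i) : ℝ))
      = Complex.exp (((n + 1 : ℕ) : ℂ) * (θ₀ * Complex.I)) := by
    rw [Complex.exp_nat_mul, ← hlamexp, ← hcycle, ← Complex.exp_sum]
    congr 1
    push_cast [Finset.mul_sum]
    ring
  obtain ⟨M, hM⟩ := Complex.exp_eq_exp_iff_exists_int.mp hexpsum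
  have hre : t * (∑ i : Fin (n + 1), f (γ i)) = (n + 1 : ℝ) * θ₀ + M * (2 * π) := by
    have him := congrArg Complex.im hM
    simp only [Complex.add_im, Complex.mul_im, Complex.I_im, Complex.I_re,
      Complex.ofReal_re, Complex.ofReal_im, Complex.natCast_im, Complex.natCast_re,
      Complex.intCast_im, Complex.intCast_re, Complex.mul_re, Complex.re_ofNat,
      Complex.im_ofNat] at him
    ring_nf at him ⊢
    push_cast at him ⊢
    linarith [him]
  apply hne M
  have : (∑ i : Fin (n + 1), f (γ i)) - (n + 1 : ℝ) * (θ₀ / t) = 2 * π / t * M := by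
    field_simp
    linarith [hre]
  exact this

/-- For every `t ≠ 0` some power of the perturbed operator has norm `< 1`. -/
lemma exists_pow_norm_lt [DecidableEq X] [Nonempty X] (P : X → X → ℝ) (f : X → ℝ)
    (hP0 : ∀ x x', 0 ≤ P x x') (hP1 : ∀ x, ∑ x', P x x' = 1)
    (h1 : Primitive P) (h3 : NonLattice P f) {t : ℝ} (ht : t ≠ 0) :
    ∃ m : ℕ, 1 ≤ m ∧ ‖toCLM (Pmat P f t ^ m)‖ < 1 := by
  classical
  set A := toCLM (Pmat P f t) with hA
  have hA1 : ‖A‖ ≤ 1 := norm_toCLM_Pmat_le_one P f hP0 hP1 t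
  haveI : Nontrivial ((X → ℂ) →L[ℂ] (X → ℂ)) := by
    refine nontrivial_of_ne 1 0 fun h => ?_
    have h1' := congrFun (congrArg DFunLike.coe h) (fun _ : X => (1 : ℂ))
    have h2' := congrFun h1' (Classical.arbitrary X)
    simp at h2'
  obtain ⟨z₀, hz₀mem, hz₀max⟩ := (spectrum.isCompact (𝕜 := ℂ) A).exists_isMaxOn
    (spectrum.nonempty A) continuous_norm.continuousOn
  by_cases hcase : ‖z₀‖ < 1
  · -- spectral radius < 1 : use Gelfand's formula
    have hsr : spectralRadius ℂ A < 1 := by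
      have hle : spectralRadius ℂ A ≤ (‖z₀‖₊ : ENNReal) := by
        rw [spectralRadius]
        refine iSup₂_le fun z hz => ?_
        exact_mod_cast hz₀max hz
      refine lt_of_le_of_lt hle ?_
      exact_mod_cast hcase
    have htend := spectrum.pow_nnnorm_pow_one_div_tendsto_nhds_spectralRadius A
    have hev : ∀ᶠ k : ℕ in atTop, (‖A ^ k‖₊ : ENNReal) ^ (1 / (k : ℝ)) < 1 :=
      htend.eventually_lt_const hsr
    obtain ⟨k, hk1, hklt⟩ := ((eventually_ge_atTop 1).and hev).exists
    refine ⟨k, hk1, ?_⟩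
    rw [toCLM_pow]
    have hlt : (‖A ^ k‖₊ : ENNReal) < 1 := by
      by_contra hge
      push_neg at hge
      have hone : (1 : ENNReal) ≤ (‖A ^ k‖₊ : ENNReal) ^ (1 / (k : ℝ)) := by
        calc (1 : ENNReal) = 1 ^ (1 / (k : ℝ)) := (ENNReal.one_rpow _).symm
          _ ≤ _ := ENNReal.rpow_le_rpow hge (by positivity)
      exact absurd hklt (not_lt.mpr hone)
    exact_mod_cast hlt
  · -- a spectral value of modulus 1 gives an eigenvector : contradiction
    exfalso
    have hz1 : ‖z₀‖ = 1 :=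
      le_antisymm ((spectrum.norm_le_norm_of_mem hz₀mem).trans hA1) (not_lt.mp hcase)
    have hnu : ¬ IsUnit (algebraMap ℂ ((X → ℂ) →L[ℂ] (X → ℂ)) z₀ - A) :=
      spectrum.mem_iff.mp hz₀mem
    set L := algebraMap ℂ ((X → ℂ) →L[ℂ] (X → ℂ)) z₀ - A with hL
    have hnotinj : ¬ Function.Injective ⇑L := by
      intro hinj
      apply hnu
      rw [ContinuousLinearMap.isUnit_iff_bijective]
      exact ⟨hinj, (LinearMap.injective_iff_surjective
        (f := (L : (X → ℂ) →ₗ[ℂ] (X → ℂ)))).mp hinj⟩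
    rw [Function.not_injective_iff] at hnotinj
    obtain ⟨a, b, hab, habne⟩ := hnotinj
    set g : X → ℂ := a - b with hgdef
    have hg0 : g ≠ 0 := sub_ne_zero.mpr habne
    have hLg : L g = 0 := by rw [hgdef, map_sub, hab, sub_self]
    have hAg : A g = z₀ • g := by
      have h' : (algebraMap ℂ ((X → ℂ) →L[ℂ] (X → ℂ)) z₀) g - A g = 0 := by
        rw [← ContinuousLinearMap.sub_apply]; exact hLg
      have h2 : (algebraMap ℂ ((X → ℂ) →L[ℂ] (X → ℂ)) z₀) g = z₀ • g := by
        rw [Algebra.algebraMap_eq_smul_one]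
        simp
      rw [h2] at h'
      exact (sub_eq_zero.mp h').symm
    have heig : ∀ x, ∑ x', (P x x' : ℂ) * Complex.exp (Complex.I * t * f x') * g x'
        = z₀ * g x := by
      intro x
      have h' := congrFun hAg x
      simp only [hA, toCLM_apply, Matrix.mulVec, dotProduct, Pmat,
        Matrix.of_apply, Pi.smul_apply, smul_eq_mul] at h'
      exact h'
    exact no_unimodular_eigen P f hP0 hP1 h1 h3 ht hz1 hg0 heig

end Aux

/-- Lemma 4.2: exponential decay of the perturbed operator,
uniformly on compact sets away from `0`. -/
theorem perturbed_operator_decay [Fintype X] [DecidableEq X] [Nonempty X]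
    (P : X → X → ℝ) (f : X → ℝ)
    (hP0 : ∀ x x', 0 ≤ P x x') (hP1 : ∀ x, ∑ x', P x x' = 1)
    (h1 : Primitive P) (h3 : NonLattice P f) :
    ∀ K : Set ℝ, IsCompact K → (0 : ℝ) ∉ K →
      ∃ c > 0, ∃ c' > 0, ∀ n : ℕ, 1 ≤ n → ∀ t ∈ K,
        ‖toCLM (Pmat P f t ^ n)‖ ≤ c * Real.exp (-c' * n) := by
  classical
  intro K hK hK0
  by_cases hKne : K.Nonempty
  swap
  · exact ⟨1, one_pos, 1, one_pos, fun n hn t htK => absurd ⟨t, htK⟩ hKne⟩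
  have hchoice : ∀ s : ℝ, ∃ m : ℕ, 1 ≤ m ∧ (s ∈ K → ‖toCLM (Pmat P f s ^ m)‖ < 1) := by
    intro s
    by_cases hs : s ∈ K
    · obtain ⟨m, hm1, hm⟩ := exists_pow_norm_lt P f hP0 hP1 h1 h3
        (fun h0 : s = 0 => hK0 (h0 ▸ hs))
      exact ⟨m, hm1, fun _ => hm⟩
    · exact ⟨1, le_refl 1, fun h => absurd h hs⟩
  choose m hm1 hm2 using hchoice
  set ρ : ℝ → ℝ := fun s => (1 + ‖toCLM (Pmat P f s ^ m s)‖) / 2 with hρdef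
  have hρhalf : ∀ s, (1:ℝ) / 2 ≤ ρ s := fun s => by
    have := norm_nonneg (toCLM (Pmat P f s ^ m s))
    simp only [hρdef]
    linarith
  have hρlt1 : ∀ s ∈ K, ρ s < 1 := fun s hs => by
    have := hm2 s hs
    simp only [hρdef]
    linarith
  have hnhds : ∀ s ∈ K, {u : ℝ | ‖toCLM (Pmat P f u ^ m s)‖ < ρ s} ∈ 𝓝 s := by
    intro s hs
    refine IsOpen.mem_nhds (isOpen_lt (continuous_norm_Pmat_pow P f (m s)) continuous_const) ?_
    have := hm2 s hs
    simp only [Set.mem_setOf_eq, hρdef]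
    linarith
  obtain ⟨T, hTK, hTcov⟩ := hK.elim_nhds_subcover
    (fun s => {u : ℝ | ‖toCLM (Pmat P f u ^ m s)‖ < ρ s}) hnhds
  have hTne : T.Nonempty := by
    obtain ⟨t₀, ht₀⟩ := hKne
    have := hTcov ht₀
    simp only [Set.mem_iUnion] at this
    obtain ⟨s, hsT, -⟩ := this
    exact ⟨s, hsT⟩
  set R := T.sup' hTne ρ with hR
  have hR1 : R < 1 := (Finset.sup'_lt_iff hTne).mpr fun s hs => hρlt1 s (hTK s hs)
  obtain ⟨s₀, hs₀⟩ := hTne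
  have hRhalf : (1:ℝ) / 2 ≤ R := le_trans (hρhalf s₀) (Finset.le_sup' ρ hs₀)
  have hRpos : 0 < R := by linarith
  set Mn := T.sup m with hMn
  have hMn1 : 1 ≤ Mn := le_trans (hm1 s₀) (Finset.le_sup hs₀)
  have hMnR : (0:ℝ) < (Mn : ℝ) := by exact_mod_cast lt_of_lt_of_le one_pos hMn1
  refine ⟨R⁻¹, inv_pos.mpr hRpos, -Real.log R / Mn, ?_, ?_⟩
  · have hlog : Real.log R < 0 := Real.log_neg hRpos hR1
    exact div_pos (by linarith) hMnR
  intro n hn t htK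
  have hcov := hTcov htK
  simp only [Set.mem_iUnion] at hcov
  obtain ⟨s, hsT, hts⟩ := hcov
  simp only [Set.mem_setOf_eq] at hts
  set A := toCLM (Pmat P f t) with hA
  have hA1 : ‖A‖ ≤ 1 := norm_toCLM_Pmat_le_one P f hP0 hP1 t
  set m₀ := m s with hm₀
  have hm₀pos : 0 < m₀ := hm1 s
  have hnorm_ms : ‖A ^ m₀‖ ≤ R := by
    rw [← toCLM_pow]
    exact le_trans (le_of_lt hts) (Finset.le_sup' ρ hsT)
  set q := n / m₀ with hq
  set r := n % m₀ with hr
  have hqr : m₀ * q + r = n := Nat.div_add_mod n m₀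
  have hnormn : ‖A ^ n‖ ≤ R ^ q := by
    have hdecomp : A ^ n = (A ^ m₀) ^ q * A ^ r := by
      rw [← pow_mul, ← pow_add, hqr]
    rw [hdecomp]
    calc ‖(A ^ m₀) ^ q * A ^ r‖ ≤ ‖(A ^ m₀) ^ q‖ * ‖A ^ r‖ := norm_mul_le _ _
      _ ≤ R ^ q * 1 := by
          refine mul_le_mul (norm_pow_le_of_le hnorm_ms q) ?_ (norm_nonneg _)
            (pow_nonneg hRpos.le q)
          calc ‖A ^ r‖ ≤ (1:ℝ) ^ r := norm_pow_le_of_le hA1 r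
            _ = 1 := one_pow r
      _ = R ^ q := mul_one _
  have hm₀Mn : m₀ ≤ Mn := Finset.le_sup hsT
  have hqge : ((n : ℝ) / Mn - 1) ≤ (q : ℝ) := by
    have hlt : n < (q + 1) * m₀ := by
      have h2 := Nat.mod_lt n hm₀pos
      calc n = m₀ * q + r := hqr.symm
        _ < m₀ * q + m₀ := Nat.add_lt_add_left h2 _
        _ = (q + 1) * m₀ := by ring
    have hlt2 : (n : ℝ) < ((q : ℝ) + 1) * Mn := by
      have h1' : (n : ℝ) < ((q : ℝ) + 1) * (m₀ : ℝ) := by exact_mod_cast hlt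
      have h2' : ((q : ℝ) + 1) * (m₀ : ℝ) ≤ ((q : ℝ) + 1) * (Mn : ℝ) := by
        have : (m₀ : ℝ) ≤ (Mn : ℝ) := by exact_mod_cast hm₀Mn
        nlinarith [Nat.cast_nonneg (α := ℝ) q]
      linarith
    rw [div_sub_one (ne_of_gt hMnR), div_le_iff₀ hMnR]
    nlinarith
  calc ‖toCLM (Pmat P f t ^ n)‖ = ‖A ^ n‖ := by rw [hA, toCLM_pow]
    _ ≤ R ^ q := hnormn
    _ = R ^ (q : ℝ) := (Real.rpow_natCast R q).symm
    _ ≤ R ^ ((n : ℝ) / Mn - 1) := Real.rpow_le_rpow_of_exponent_ge hRpos hR1.le hqge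
    _ = R⁻¹ * Real.exp (-(-Real.log R / Mn) * n) := by
        rw [Real.rpow_sub hRpos, Real.rpow_one, Real.rpow_def_of_pos hRpos,
          div_eq_mul_inv, mul_comm]
        congr 1
        ring

end CLLT
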